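/- arXiv:2504.04933 — 2 statements merged into one kernel-verified Lean document; each statement's English description precedes it below -/
import Mathlib

section
/- Fix real constants m₀ > 0, ω > 0, ħ > 0, a > -1 and set λ₀ = √(m₀ω/ħ). Define, for complex-valued f and x ≠ 0, the deformed position operator (X̃f)(x) = √m₀·λ₀^a·|x|^a·x·f(x) and the deformed momentum operator (P̃f)(x) = -iħ·(λ₀^a√m₀)⁻¹·(|x|^{-a}·f'(x) - (a/2)·|x|^{-a-2}·x·f(x)). Then for every f : ℝ → ℂ differentiable at a point x ≠ 0, the commutator satisfies P̃(X̃f)(x) - X̃(P̃f)(x) = -iħ·(1+a)·f(x). -/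
/-- The deformed position operator `(X̃f)(x) = √m₀·λ₀^a·|x|^a·x·f(x)`. -/
noncomputable def Xop (m₀ lam a : ℝ) (f : ℝ → ℂ) (x : ℝ) : ℂ :=
  ((Real.sqrt m₀ * lam ^ a * |x| ^ a * x : ℝ) : ℂ) * f x

/-- The deformed momentum operator
`(P̃f)(x) = -ihbar·(λ₀^a√m₀)⁻¹·(|x|^(-a)·f'(x) - (a/2)·|x|^(-a-2)·x·f(x))`. -/
noncomputable def Pop (hbar m₀ lam a : ℝ) (f : ℝ → ℂ) (x : ℝ) : ℂ :=
  (-Complex.I) * (hbar : ℂ) * (((lam ^ a * Real.sqrt m₀ : ℝ) : ℂ))⁻¹ *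
    (((|x| ^ (-a) : ℝ) : ℂ) * deriv f x
      - ((a / 2 : ℝ) : ℂ) * ((|x| ^ (-a - 2) : ℝ) : ℂ) * (x : ℂ) * f x)

lemma gderiv (a x : ℝ) (hx : x ≠ 0) :
    HasDerivAt (fun y : ℝ => |y| ^ a * y) ((a + 1) * |x| ^ a) x := by
  have habs := hasDerivAt_abs hx
  have hr := (Real.hasDerivAt_rpow_const (p := a) (Or.inl (abs_ne_zero.2 hx))).comp x habs
  have h : HasDerivAt (fun y : ℝ => |y| ^ a * y)
      (a * |x| ^ (a - 1) * (SignType.sign x : ℝ) * id x + ((fun x : ℝ => x ^ a) ∘ abs) x * 1) x :=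
    hr.mul (hasDerivAt_id x)
  convert h using 1
  have hs : (SignType.sign x : ℝ) * x = |x| := by
    rcases hx.lt_or_gt with h | h
    · simp [h, abs_of_neg h]
    · simp [h, abs_of_pos h]
  have hpow : |x| ^ (a - 1) * |x| = |x| ^ a := by
    rw [← Real.rpow_add_one (abs_ne_zero.2 hx)]; ring_nf
  simp only [Function.comp_def, id_eq, mul_one]
  have e1 : a * |x| ^ (a - 1) * (SignType.sign x : ℝ) * x
      = a * (|x| ^ (a - 1) * ((SignType.sign x : ℝ) * x)) := by ring
  rw [e1, hs, hpow]; ring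

/-- the commutator `[P̃, X̃] = -ihbar(1+a)` at every point `x ≠ 0` where `f` is
differentiable. -/
theorem stmt1 (m₀ ω hbar a : ℝ) (hm₀ : 0 < m₀) (hω : 0 < ω) (hhb : 0 < hbar) (ha : -1 < a)
    (lam : ℝ) (hlam : lam = Real.sqrt (m₀ * ω / hbar))
    (f : ℝ → ℂ) (x : ℝ) (hx : x ≠ 0) (hf : DifferentiableAt ℝ f x) :
    Pop hbar m₀ lam a (Xop m₀ lam a f) x - Xop m₀ lam a (Pop hbar m₀ lam a f) x
      = (-Complex.I) * (hbar : ℂ) * ((1 + a : ℝ) : ℂ) * f x := by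
  have hlam0 : 0 < lam := by rw [hlam]; exact Real.sqrt_pos.2 (by positivity)
  have ht : (0:ℝ) < |x| := abs_pos.2 hx
  have hC : (0:ℝ) < lam ^ a * Real.sqrt m₀ := by positivity
  have hX : HasDerivAt (Xop m₀ lam a f)
      ((((Real.sqrt m₀ * lam ^ a * ((a + 1) * |x| ^ a)) : ℝ) : ℂ) * f x
        + (((Real.sqrt m₀ * lam ^ a * (|x| ^ a * x)) : ℝ) : ℂ) * deriv f x) x := by
    have hg := ((gderiv a x hx).const_mul (Real.sqrt m₀ * lam ^ a)).ofReal_comp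
    have h2 : Xop m₀ lam a f = fun y => ((Real.sqrt m₀ * lam ^ a * (|y| ^ a * y) : ℝ) : ℂ) * f y := by
      funext y; simp [Xop, mul_assoc]
    rw [h2]
    exact hg.mul hf.hasDerivAt
  simp only [Pop, Xop, hX.deriv]
  have huv : ((|x| ^ (-a) : ℝ) : ℂ) * ((|x| ^ a : ℝ) : ℂ) = 1 := by
    rw [← Complex.ofReal_mul, ← Real.rpow_add ht]
    norm_num
  have hCne : (((lam ^ a * Real.sqrt m₀ : ℝ) : ℂ)) ≠ 0 := by
    exact_mod_cast hC.ne'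
  have hinv : (((lam ^ a : ℝ) : ℂ) * ((Real.sqrt m₀ : ℝ) : ℂ))⁻¹ *
      (((lam ^ a : ℝ) : ℂ) * ((Real.sqrt m₀ : ℝ) : ℂ)) = 1 := by
    rw [inv_mul_cancel₀]
    push_cast at hCne
    exact_mod_cast hCne
  push_cast
  linear_combination (-Complex.I * (hbar : ℂ) * ((1 : ℂ) + a) * f x * ((|x| ^ (-a) : ℝ) : ℂ) * ((|x| ^ a : ℝ) : ℂ)) * hinv + (-Complex.I * (hbar : ℂ) * ((1 : ℂ) + a) * f x) * huv
end

section
/- Fix real constants m₀ > 0, ω > 0, ħ > 0, a > -1 and set λ₀ = √(m₀ω/ħ). Define for x ≠ 0: (X̃f)(x) = √m₀·λ₀^a·|x|^a·x·f(x), (P̃f)(x) = -iħ·(λ₀^a√m₀)⁻¹·(|x|^{-a}·f'(x) - (a/2)·|x|^{-a-2}·x·f(x)), and the ladder operators (ã^±f)(x) = (1/√2)·(√(ω/ħ)·(X̃f)(x) ∓ (i/√(ħω))·(P̃f)(x)). Then for every f : ℝ → ℂ that is twice differentiable on ℝ \ {0} and every x ≠ 0: ã⁻(ã⁺f)(x)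 - ã⁺(ã⁻f)(x) = (1+a)·f(x). -/
set_option maxHeartbeats 1000000

lemma habs_rpow (p : ℝ) {x : ℝ} (hx : x ≠ 0) :
    HasDerivAt (fun y : ℝ => |y| ^ p) (p * |x| ^ (p - 2) * x) x := by
  have hax : |x| ≠ 0 := abs_ne_zero.mpr hx
  have hstep : |x| ^ (p - 1) = |x| ^ (p - 2) * |x| := by
    rw [← Real.rpow_add_one hax]; congr 1; ring
  rcases hx.lt_or_gt with h | h
  · have h1 : HasDerivAt (fun t : ℝ => t ^ p) (p * |x| ^ (p - 1)) |x| :=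
      Real.hasDerivAt_rpow_const (Or.inl hax)
    have h2 := h1.comp x (hasDerivAt_abs_neg h)
    refine h2.congr_deriv ?_
    rw [hstep, abs_of_neg h]; ring
  · have h1 : HasDerivAt (fun t : ℝ => t ^ p) (p * |x| ^ (p - 1)) |x| :=
      Real.hasDerivAt_rpow_const (Or.inl hax)
    have h2 := h1.comp x (hasDerivAt_abs_pos h)
    refine h2.congr_deriv ?_
    rw [hstep, abs_of_pos h]; ring



/-- The creation operator `(ã⁺f)(x) = (1/√2)·(√(ω/ħ)·(X̃f)(x) - (i/√(ħω))·(P̃f)(x))`. -/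
noncomputable def aPlus (hbar m₀ ω lam a : ℝ) (f : ℝ → ℂ) (x : ℝ) : ℂ :=
  ((1 / Real.sqrt 2 : ℝ) : ℂ) *
    (((Real.sqrt (ω / hbar) : ℝ) : ℂ) * Xop m₀ lam a f x
      - Complex.I / ((Real.sqrt (hbar * ω) : ℝ) : ℂ) * Pop hbar m₀ lam a f x)

/-- The annihilation operator `(ã⁻f)(x) = (1/√2)·(√(ω/ħ)·(X̃f)(x) + (i/√(ħω))·(P̃f)(x))`. -/
noncomputable def aMinus (hbar m₀ ω lam a : ℝ) (f : ℝ → ℂ) (x : ℝ) : ℂ :=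
  ((1 / Real.sqrt 2 : ℝ) : ℂ) *
    (((Real.sqrt (ω / hbar) : ℝ) : ℂ) * Xop m₀ lam a f x
      + Complex.I / ((Real.sqrt (hbar * ω) : ℝ) : ℂ) * Pop hbar m₀ lam a f x)

/-- the commutator `[ã⁻, ã⁺] = 1 + a` for every `f` twice differentiable on
`ℝ \ {0}` and every `x ≠ 0`. -/
theorem stmt2 (m₀ ω hbar a : ℝ) (hm₀ : 0 < m₀) (hω : 0 < ω) (hhb : 0 < hbar) (ha : -1 < a)
    (lam : ℝ) (hlam : lam = Real.sqrt (m₀ * ω / hbar))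
    (f : ℝ → ℂ)
    (hf : ∀ y : ℝ, y ≠ 0 → DifferentiableAt ℝ f y)
    (hf' : ∀ y : ℝ, y ≠ 0 → DifferentiableAt ℝ (deriv f) y)
    (x : ℝ) (hx : x ≠ 0) :
    aMinus hbar m₀ ω lam a (aPlus hbar m₀ ω lam a f) x
      - aPlus hbar m₀ ω lam a (aMinus hbar m₀ ω lam a f) x
      = ((1 + a : ℝ) : ℂ) * f x := by
  
  have hxC : (x : ℂ) ≠ 0 := Complex.ofReal_ne_zero.mpr hx
  have hxa : (0:ℝ) < |x| := abs_pos.mpr hx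
  have hsub : ∀ q : ℝ, |x| ^ (q - 2) = |x| ^ q / (x * x) := by
    intro q
    rw [Real.rpow_sub hxa, show ((2:ℝ)) = ((2:ℕ):ℝ) by norm_num, Real.rpow_natCast, sq_abs, pow_two]
  have hfx : HasDerivAt f (deriv f x) x := (hf x hx).hasDerivAt
  have hux : HasDerivAt (deriv f) (deriv (deriv f) x) x := (hf' x hx).hasDerivAt
  have hyC : HasDerivAt (fun y : ℝ => (y : ℂ)) 1 x := by
    simpa using (hasDerivAt_id x).ofReal_comp
  -- derivative of the Xop part
  have hX : HasDerivAt (fun y : ℝ => ((Real.sqrt m₀ * lam ^ a * |y| ^ a * y : ℝ) : ℂ) * f y)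
      (((Real.sqrt m₀ * lam ^ a * ((a + 1) * |x| ^ a) : ℝ) : ℂ) * f x
        + ((Real.sqrt m₀ * lam ^ a * |x| ^ a * x : ℝ) : ℂ) * deriv f x) x := by
    have h := ((((habs_rpow a hx).const_mul (Real.sqrt m₀ * lam ^ a)).mul
        (hasDerivAt_id' (𝕜 := ℝ) x)).ofReal_comp).mul hfx
    refine h.congr_deriv ?_
    push_cast [hsub a, Pi.mul_apply]
    field_simp [hxC]
  -- derivative of the Pop part (explicit machine form)
  have h1 := ((habs_rpow (-a) hx).ofReal_comp).mul hux
  have h2 := ((((habs_rpow (-a - 2) hx).ofReal_comp).const_mul ((a / 2 : ℝ) : ℂ)).mul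
    hyC).mul hfx
  have hP : HasDerivAt (fun y : ℝ =>
        (-Complex.I) * (hbar : ℂ) * (((lam ^ a * Real.sqrt m₀ : ℝ) : ℂ))⁻¹ *
          (((|y| ^ (-a) : ℝ) : ℂ) * deriv f y
            - ((a / 2 : ℝ) : ℂ) * ((|y| ^ (-a - 2) : ℝ) : ℂ) * (y : ℂ) * f y))
      ((-Complex.I) * (hbar : ℂ) * (((lam ^ a * Real.sqrt m₀ : ℝ) : ℂ))⁻¹ *
      (((-a * |x| ^ (-a - 2) * x : ℝ) : ℂ) * deriv f x + ((|x| ^ (-a) : ℝ) : ℂ) * deriv (deriv f) x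
        - ((((a / 2 : ℝ) : ℂ) * (((-a - 2) * |x| ^ (-a - 2 - 2) * x : ℝ) : ℂ) * ((x : ℝ) : ℂ)
              + ((a / 2 : ℝ) : ℂ) * ((|x| ^ (-a - 2) : ℝ) : ℂ) * 1) * f x
          + ((a / 2 : ℝ) : ℂ) * ((|x| ^ (-a - 2) : ℝ) : ℂ) * ((x : ℝ) : ℂ) * deriv f x))) x :=
    (h1.sub h2).const_mul _
  have hAp : HasDerivAt (aPlus hbar m₀ ω lam a f) _ x :=
    ((hX.const_mul ((Real.sqrt (ω / hbar) : ℝ) : ℂ)).sub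
      (hP.const_mul (Complex.I / ((Real.sqrt (hbar * ω) : ℝ) : ℂ)))).const_mul
      ((1 / Real.sqrt 2 : ℝ) : ℂ)
  have hAm : HasDerivAt (aMinus hbar m₀ ω lam a f) _ x :=
    ((hX.const_mul ((Real.sqrt (ω / hbar) : ℝ) : ℂ)).add
      (hP.const_mul (Complex.I / ((Real.sqrt (hbar * ω) : ℝ) : ℂ)))).const_mul
      ((1 / Real.sqrt 2 : ℝ) : ℂ)
  have hDp := hAp.deriv
  have hDm := hAm.deriv
  have vplus : ∀ g : ℝ → ℂ, aPlus hbar m₀ ω lam a g x =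
      ((1 / Real.sqrt 2 : ℝ) : ℂ) *
        (((Real.sqrt (ω / hbar) : ℝ) : ℂ) * (((Real.sqrt m₀ * lam ^ a * |x| ^ a * x : ℝ) : ℂ) * g x)
          - Complex.I / ((Real.sqrt (hbar * ω) : ℝ) : ℂ) *
            ((-Complex.I) * (hbar : ℂ) * (((lam ^ a * Real.sqrt m₀ : ℝ) : ℂ))⁻¹ *
              (((|x| ^ (-a) : ℝ) : ℂ) * deriv g x
                - ((a / 2 : ℝ) : ℂ) * ((|x| ^ (-a - 2) : ℝ) : ℂ) * (x : ℂ) * g x))) :=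
    fun g => rfl
  have vminus : ∀ g : ℝ → ℂ, aMinus hbar m₀ ω lam a g x =
      ((1 / Real.sqrt 2 : ℝ) : ℂ) *
        (((Real.sqrt (ω / hbar) : ℝ) : ℂ) * (((Real.sqrt m₀ * lam ^ a * |x| ^ a * x : ℝ) : ℂ) * g x)
          + Complex.I / ((Real.sqrt (hbar * ω) : ℝ) : ℂ) *
            ((-Complex.I) * (hbar : ℂ) * (((lam ^ a * Real.sqrt m₀ : ℝ) : ℂ))⁻¹ *
              (((|x| ^ (-a) : ℝ) : ℂ) * deriv g x
                - ((a / 2 : ℝ) : ℂ) * ((|x| ^ (-a - 2) : ℝ) : ℂ) * (x : ℂ) * g x))) :=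
    fun g => rfl
  -- nonvanishing facts
  have hB : |x| ^ (-a) = (|x| ^ a)⁻¹ := Real.rpow_neg (abs_nonneg x) a
  have hd_eq : Real.sqrt (hbar * ω) = Real.sqrt (ω / hbar) * hbar := by
    rw [show hbar * ω = ω / hbar * hbar ^ 2 by field_simp,
      Real.sqrt_mul (div_nonneg hω.le hhb.le), Real.sqrt_sq hhb.le]
  have hlam0 : (0:ℝ) < lam ^ a := by
    apply Real.rpow_pos_of_pos
    rw [hlam]; positivity
  have hA0 : (0:ℝ) < |x| ^ a := Real.rpow_pos_of_pos hxa a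
  have hAC : ((|x| ^ a : ℝ) : ℂ) ≠ 0 := Complex.ofReal_ne_zero.mpr hA0.ne'
  have h2C : ((Real.sqrt 2 : ℝ) : ℂ) ≠ 0 :=
    Complex.ofReal_ne_zero.mpr (Real.sqrt_pos.mpr (by norm_num)).ne'
  have hcC : ((Real.sqrt (ω / hbar) : ℝ) : ℂ) ≠ 0 :=
    Complex.ofReal_ne_zero.mpr (Real.sqrt_pos.mpr (by positivity)).ne'
  have hbC : ((hbar : ℝ) : ℂ) ≠ 0 := Complex.ofReal_ne_zero.mpr hhb.ne'
  have hlC : ((lam ^ a : ℝ) : ℂ) ≠ 0 := Complex.ofReal_ne_zero.mpr hlam0.ne'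
  have hmC : ((Real.sqrt m₀ : ℝ) : ℂ) ≠ 0 :=
    Complex.ofReal_ne_zero.mpr (Real.sqrt_pos.mpr hm₀).ne'
  -- the core commutator identity  [X,P] = i ħ (1+a)
  have e2 : (-Complex.I) * (hbar : ℂ) * (((lam ^ a * Real.sqrt m₀ : ℝ) : ℂ))⁻¹ *
        (((|x| ^ (-a) : ℝ) : ℂ) * (((Real.sqrt m₀ * lam ^ a * ((a + 1) * |x| ^ a) : ℝ) : ℂ) * f x + ((Real.sqrt m₀ * lam ^ a * |x| ^ a * x : ℝ) : ℂ) * deriv f x)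
          - ((a / 2 : ℝ) : ℂ) * ((|x| ^ (-a - 2) : ℝ) : ℂ) * (x : ℂ) * (((Real.sqrt m₀ * lam ^ a * |x| ^ a * x : ℝ) : ℂ) * f x))
        - ((Real.sqrt m₀ * lam ^ a * |x| ^ a * x : ℝ) : ℂ) * ((-Complex.I) * (hbar : ℂ) * (((lam ^ a * Real.sqrt m₀ : ℝ) : ℂ))⁻¹ * (((|x| ^ (-a) : ℝ) : ℂ) * deriv f x
            - ((a / 2 : ℝ) : ℂ) * ((|x| ^ (-a - 2) : ℝ) : ℂ) * (x : ℂ) * f x))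
      = -Complex.I * (hbar : ℂ) * ((1 + a : ℝ) : ℂ) * f x := by
    simp only [hsub (-a - 2), hsub (-a), hB]
    push_cast
    field_simp [hxC, hAC, hlC, hmC]
    have hone : ((Real.sqrt m₀ : ℝ) : ℂ) * (((Real.sqrt m₀ : ℝ) : ℂ))⁻¹ *
        (((lam ^ a : ℝ) : ℂ) * (((lam ^ a : ℝ) : ℂ))⁻¹) *
        (((|x| ^ a : ℝ) : ℂ) ^ 2 * ((((|x| ^ a : ℝ) : ℂ))⁻¹) ^ 2) *
        ((x : ℂ) ^ 2 * (((x : ℂ))⁻¹) ^ 2) = 1 := by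
      field_simp
    ring
  rw [vminus (aPlus hbar m₀ ω lam a f), vplus (aMinus hbar m₀ ω lam a f), hDp, hDm,
    vplus f, vminus f]
  trans ((2 : ℂ) * ((1 / Real.sqrt 2 : ℝ) : ℂ) ^ 2 * ((Real.sqrt (ω / hbar) : ℝ) : ℂ) *
      (Complex.I / ((Real.sqrt (hbar * ω) : ℝ) : ℂ)) *
      (-Complex.I * (hbar : ℂ) * ((1 + a : ℝ) : ℂ) * f x))
  · rw [← e2]; ring
  · have hk : ((1 / Real.sqrt 2 : ℝ) : ℂ) ^ 2 = 1 / 2 := by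
      rw [← Complex.ofReal_pow]
      norm_num [div_pow, Real.sq_sqrt]
    rw [hk, hd_eq]
    push_cast
    field_simp [hcC, hbC]
    ring_nf
    simp only [Complex.I_sq]
    ring_nf
end
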